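/- Let H be an infinite-dimensional separable complex Hilbert space. There exists a bounded normal (in fact unitary) operator S on H such that P(S) = {0} while σ(S) ∩ G ≠ ∅; indeed one may take S diagonal with S e_n = e^{2πi(q_n+√2)} e_n, where {q_n} enumerates ℚ ∩ [0,1), and then σ(S) is the whole unit circle. -/

import Mathlib

open Complex Real
open scoped ENNReal

noncomputable section

namespace DiagAux

lemma two_toReal_pos : (0:ℝ) < (2:ℝ≥0∞).toReal := by norm_num

lemma memℓp_mul (c : ℕ → ℂ) (hc : ∀ n, ‖c n‖ = 1) {x : ℕ → ℂ} (hx : Memℓp x 2) :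
    Memℓp (fun n => c n * x n) 2 := by
  apply memℓp_gen
  refine (hx.summable two_toReal_pos).congr fun n => ?_
  simp [norm_mul, hc n]

def mulLM (c : ℕ → ℂ) (hc : ∀ n, ‖c n‖ = 1) :
    lp (fun _ : ℕ => ℂ) 2 →ₗ[ℂ] lp (fun _ : ℕ => ℂ) 2 where
  toFun x := ⟨fun n => c n * x n, memℓp_mul c hc (lp.memℓp x)⟩
  map_add' x y := by
    apply lp.ext; funext n
    simp [lp.coeFn_add, mul_add]; rfl
  map_smul' a x := by
    apply lp.ext; funext n
    simp [lp.coeFn_smul, smul_eq_mul]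
    ring

@[simp] lemma mulLM_apply (c : ℕ → ℂ) (hc : ∀ n, ‖c n‖ = 1) (x : lp (fun _ : ℕ => ℂ) 2) (n : ℕ) :
    (mulLM c hc x : ∀ _ : ℕ, ℂ) n = c n * x n := rfl

lemma cne (c : ℕ → ℂ) (hc : ∀ n, ‖c n‖ = 1) (n : ℕ) : c n ≠ 0 := by
  intro h
  have := hc n
  rw [h] at this
  simp at this

lemma hcinv (c : ℕ → ℂ) (hc : ∀ n, ‖c n‖ = 1) (n : ℕ) : ‖(c n)⁻¹‖ = 1 := by
  rw [norm_inv, hc, inv_one]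

def mulLIE (c : ℕ → ℂ) (hc : ∀ n, ‖c n‖ = 1) :
    lp (fun _ : ℕ => ℂ) 2 ≃ₗᵢ[ℂ] lp (fun _ : ℕ => ℂ) 2 :=
  { LinearEquiv.ofLinear (re₁₂ := inferInstance) (re₂₁ := inferInstance) (mulLM c hc) (mulLM (fun n => (c n)⁻¹) (hcinv c hc))
      (LinearMap.ext fun x => lp.ext (funext fun n => by
        simp only [LinearMap.comp_apply, mulLM_apply, LinearMap.id_apply]
        exact mul_inv_cancel_left₀ (cne c hc n) _))
      (LinearMap.ext fun x => lp.ext (funext fun n => by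
        simp only [LinearMap.comp_apply, mulLM_apply, LinearMap.id_apply]
        exact inv_mul_cancel_left₀ (cne c hc n) _)) with
    norm_map' := fun x => by
      simp only [LinearEquiv.coe_mk, LinearEquiv.ofLinear_apply]
      rw [lp.norm_eq_tsum_rpow two_toReal_pos, lp.norm_eq_tsum_rpow two_toReal_pos]
      congr 1
      exact tsum_congr fun n => by rw [mulLM_apply]; simp [norm_mul, hc n] }

@[simp] lemma mulLIE_apply (c : ℕ → ℂ) (hc : ∀ n, ‖c n‖ = 1) (x : lp (fun _ : ℕ => ℂ) 2)
    (n : ℕ) : (mulLIE c hc x : ∀ _ : ℕ, ℂ) n = c n * x n := rfl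

lemma near (θ ε : ℝ) (hε : 0 < ε) :
    ∃ r : ℚ, ‖Complex.exp (↑(2*π*((r:ℝ) + Real.sqrt 2)) * I) - Complex.exp (↑θ * I)‖ < ε := by
  have hπ : (0:ℝ) < π := Real.pi_pos
  set δ : ℝ := min (ε/2) (1/2) / (2*π) with hδdef
  have hδ : 0 < δ := by
    apply div_pos (lt_min (by linarith) (by norm_num)) (by linarith)
  obtain ⟨r, hr⟩ := exists_rat_near (θ/(2*π) - Real.sqrt 2) hδ
  refine ⟨r, ?_⟩
  set w : ℝ := 2*π*((r:ℝ) + Real.sqrt 2) - θ with hwdef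
  have h2π : (0:ℝ) < 2*π := by linarith
  have hw : |w| < min (ε/2) (1/2) := by
    have hw2 : w = 2*π * ((r:ℝ) - (θ/(2*π) - Real.sqrt 2)) := by
      rw [hwdef]; field_simp; ring
    rw [hw2, abs_mul, abs_of_pos h2π, abs_sub_comm]
    calc 2*π * |θ/(2*π) - Real.sqrt 2 - (r:ℝ)| < 2*π*δ :=
        mul_lt_mul_of_pos_left hr h2π
      _ = min (ε/2) (1/2) := by rw [hδdef]; field_simp
  have key : Complex.exp (↑(2*π*((r:ℝ) + Real.sqrt 2)) * I) - Complex.exp (↑θ * I)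
      = Complex.exp (↑θ * I) * (Complex.exp (↑w * I) - 1) := by
    rw [mul_sub, mul_one, ← Complex.exp_add]
    congr 1
    push_cast [hwdef]
    ring
  rw [key, norm_mul]
  have h1 : ‖Complex.exp (↑θ*I)‖ = 1 := by
    rw [Complex.norm_exp_ofReal_mul_I]
  rw [h1, one_mul]
  have habs : ‖(↑w * I : ℂ)‖ ≤ 1 := by
    rw [norm_mul, Complex.norm_I, mul_one, Complex.norm_real, Real.norm_eq_abs]
    have := min_le_right (ε/2) (1/2:ℝ)
    linarith
  have hle := Complex.norm_exp_sub_one_le habs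
  have h2 : ‖(↑w * I : ℂ)‖ = |w| := by
    rw [norm_mul, Complex.norm_I, mul_one, Complex.norm_real, Real.norm_eq_abs]
  have h3 := min_le_left (ε/2) (1/2:ℝ)
  calc ‖Complex.exp (↑w*I) - 1‖ ≤ 2 * ‖(↑w*I : ℂ)‖ := hle
    _ = 2*|w| := by rw [h2]
    _ < ε := by linarith

lemma not_root (r : ℚ) (m : ℕ) (hm : 0 < m) :
    Complex.exp (↑(2*π*((r:ℝ) + Real.sqrt 2)) * I) ^ m ≠ 1 := by
  intro h
  rw [← Complex.exp_nat_mul, Complex.exp_eq_one_iff] at h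
  obtain ⟨k, hk⟩ := h
  have hI : (((m:ℝ) * (2*π*((r:ℝ)+Real.sqrt 2)) : ℝ) : ℂ) = (((k:ℝ) * (2*π) : ℝ) : ℂ) := by
    apply mul_right_cancel₀ Complex.I_ne_zero
    push_cast
    push_cast at hk
    linear_combination hk
  have hr : (m:ℝ) * (2*π*((r:ℝ)+Real.sqrt 2)) = (k:ℝ) * (2*π) := by exact_mod_cast hI
  have hπ : (2*π:ℝ) ≠ 0 := by positivity
  have h2 : (2*π:ℝ) * ((m:ℝ) * ((r:ℝ) + Real.sqrt 2)) = (2*π:ℝ) * (k:ℝ) := by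
    linarith [hr]
  have h3 : (m:ℝ) * ((r:ℝ) + Real.sqrt 2) = (k:ℝ) := mul_left_cancel₀ hπ h2
  have hm' : ((m:ℝ)) ≠ 0 := Nat.cast_ne_zero.mpr hm.ne'
  apply irrational_sqrt_two
  refine ⟨(k:ℚ)/(m:ℚ) - r, ?_⟩
  push_cast
  field_simp
  nlinarith [h3]

end DiagAux

end

/-- On an infinite-dimensional separable complex Hilbert space there exists a normal
(in fact unitary) operator `S` whose only periodic point is `0`, while the spectrum of `S`
does meet the roots of unity; in fact the spectrum is the whole unit circle. -/
theorem exists_unitary_trivial_periodic_points_spectrum_meets_roots_of_unity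
    {H : Type*} [NormedAddCommGroup H] [InnerProductSpace ℂ H] [CompleteSpace H]
    (e : HilbertBasis ℕ ℂ H) :
    ∃ S : H →L[ℂ] H, S ∈ unitary (H →L[ℂ] H) ∧ IsStarNormal S ∧
      {x : H | ∃ m : ℕ, 0 < m ∧ (S ^ m) x = x} = {0} ∧
      (spectrum ℂ S ∩ {z : ℂ | ∃ k : ℕ, 0 < k ∧ z ^ k = 1}).Nonempty ∧
      spectrum ℂ S = Metric.sphere (0 : ℂ) 1 := by
  classical
  have hnorm1 : ∀ n, ‖e n‖ = 1 := e.orthonormal.1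
  haveI : Nontrivial H := by
    refine ⟨e 0, 0, fun h0 => ?_⟩
    have h := hnorm1 0
    rw [h0] at h
    simp at h
  obtain ⟨q, hq⟩ := exists_surjective_nat ℚ
  set c : ℕ → ℂ := fun n => Complex.exp (↑(2*Real.pi*((q n : ℝ) + Real.sqrt 2)) * Complex.I)
    with hcdef
  have hc : ∀ n, ‖c n‖ = 1 := fun n => by
    exact Complex.norm_exp_ofReal_mul_I _
  set M := DiagAux.mulLIE c hc with hM
  set E : H ≃ₗᵢ[ℂ] H := (e.repr.trans M).trans e.repr.symm with hE
  set Su : unitary (H →L[ℂ] H) := (Unitary.linearIsometryEquiv (𝕜 := ℂ) (H := H)).symm E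
    with hSu
  set S : H →L[ℂ] H := (Su : H →L[ℂ] H) with hS
  have hSx : ∀ x : H, S x = e.repr.symm (M (e.repr x)) := fun x => rfl
  have hkey : ∀ (x : H) (n : ℕ), e.repr (S x) n = c n * e.repr x n := by
    intro x n
    rw [hSx, LinearIsometryEquiv.apply_symm_apply]
    rfl
  have hSe : ∀ n : ℕ, S (e n) = c n • e n := by
    intro n
    apply e.repr.injective
    apply lp.ext; funext k
    rw [hkey]
    rw [LinearIsometryEquiv.map_smul, e.repr_self, lp.coeFn_smul, Pi.smul_apply, smul_eq_mul]
    by_cases hkn : k = n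
    · subst hkn; rw [lp.single_apply_self]
    · rw [lp.single_apply_ne _ _ _ hkn, mul_zero, mul_zero]
  have hpow : ∀ (m : ℕ) (x : H) (n : ℕ), e.repr ((S ^ m) x) n = c n ^ m * e.repr x n := by
    intro m
    induction m with
    | zero => intro x n; simp
    | succ m ih =>
      intro x n
      rw [pow_succ, ContinuousLinearMap.mul_apply, ih, hkey]
      ring
  have hmem : ∀ z ∈ Metric.sphere (0:ℂ) 1, z ∈ spectrum ℂ S := by
    intro z hz
    have hz1 : ‖z‖ = 1 := by simpa [mem_sphere_iff_norm] using hz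
    by_contra hns
    rw [spectrum.notMem_iff] at hns
    obtain ⟨B, hB⟩ := hns
    set a : ℝ := ‖(↑B⁻¹ : H →L[ℂ] H)‖ with ha
    obtain ⟨θ, hθ⟩ := (Complex.norm_eq_one_iff z).mp
      (by exact hz1)
    have hpos : (0:ℝ) < (a+1)⁻¹ := by positivity
    obtain ⟨r, hrn⟩ := DiagAux.near θ ((a+1)⁻¹) hpos
    obtain ⟨n, hn⟩ := hq r
    have hcz : ‖c n - z‖ < (a+1)⁻¹ := by
      have hcn : c n = Complex.exp (↑(2*Real.pi*((r:ℝ) + Real.sqrt 2)) * Complex.I) := by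
        rw [hcdef]; simp [hn]
      rw [hcn, ← hθ]
      exact hrn
    have hT : (algebraMap ℂ (H →L[ℂ] H) z - S) (e n) = (z - c n) • e n := by
      rw [ContinuousLinearMap.sub_apply, Algebra.algebraMap_eq_smul_one,
        ContinuousLinearMap.smul_apply, ContinuousLinearMap.one_apply, hSe n, sub_smul]
    have hBn : (↑B⁻¹ : H →L[ℂ] H) ((algebraMap ℂ (H →L[ℂ] H) z - S) (e n)) = e n := by
      have h1 : (↑B⁻¹ * ↑B : H →L[ℂ] H) = 1 := B.inv_mul
      calc (↑B⁻¹ : H →L[ℂ] H) ((algebraMap ℂ (H →L[ℂ] H) z - S) (e n))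
          = (↑B⁻¹ * ↑B : H →L[ℂ] H) (e n) := by rw [hB]; rfl
        _ = e n := by rw [h1]; rfl
    have hge : (1:ℝ) ≤ a * ‖z - c n‖ := by
      calc (1:ℝ) = ‖e n‖ := (hnorm1 n).symm
        _ = ‖(↑B⁻¹ : H →L[ℂ] H) ((z - c n) • e n)‖ := by rw [← hT, hBn]
        _ ≤ a * ‖(z - c n) • e n‖ := ContinuousLinearMap.le_opNorm _ _
        _ = a * ‖z - c n‖ := by rw [norm_smul, hnorm1 n, mul_one]
    have hzc : ‖z - c n‖ < (a+1)⁻¹ := by rw [norm_sub_rev]; exact hcz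
    have ha0 : 0 ≤ a := norm_nonneg _
    have h3 : a * ‖z - c n‖ ≤ (a+1) * ‖z - c n‖ := by nlinarith [norm_nonneg (z - c n)]
    have h4 : (a+1) * ‖z - c n‖ < (a+1) * (a+1)⁻¹ :=
      mul_lt_mul_of_pos_left hzc (by linarith)
    rw [mul_inv_cancel₀ (by linarith : a+1 ≠ 0)] at h4
    linarith
  have hspec : spectrum ℂ S = Metric.sphere (0:ℂ) 1 :=
    Set.Subset.antisymm (spectrum.subset_circle_of_unitary Su.2) (fun z hz => hmem z hz)
  have hunit := Unitary.mem_iff.mp Su.2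
  refine ⟨S, Su.2, ⟨hunit.1.trans hunit.2.symm⟩, ?_, ?_, hspec⟩
  · ext x
    simp only [Set.mem_setOf_eq, Set.mem_singleton_iff]
    constructor
    · rintro ⟨m, hm, hx⟩
      have hzero : e.repr x = 0 := by
        apply lp.ext; funext n
        have h1 : c n ^ m * e.repr x n = e.repr x n := by
          rw [← hpow m x n, hx]
        by_contra hne0
        have hne0' : (e.repr x : ∀ _ : ℕ, ℂ) n ≠ 0 := by simpa using hne0
        have hcm : c n ^ m = 1 := by
          have := mul_right_cancel₀ hne0' (h1.trans (one_mul _).symm)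
          exact this
        have : c n = Complex.exp (↑(2*Real.pi*((q n:ℝ) + Real.sqrt 2)) * Complex.I) := rfl
        rw [this] at hcm
        exact DiagAux.not_root (q n) m hm hcm
      have : e.repr x = e.repr 0 := by rw [hzero, map_zero]
      exact e.repr.injective this
    · rintro rfl
      exact ⟨1, one_pos, by simp⟩
  · refine ⟨1, ?_, ⟨1, one_pos, one_pow 1⟩⟩
    rw [hspec]
    simp
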